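/- Let J = diag(J1,J2,J3) with J1,J2,J3 > 0 and E(w) := J^{-1}(Jw × w). Let (R, ω) solve the free-rotation dynamics R'(t) = R(t)·[ω(t)]ₓ, ω'(t) = E(ω(t)) with R(t₀) ∈ SO(3), and suppose ω(t₀) ≠ 0 is an eigenvector of J. Let å ∈ ℝ³ be a unit vector parallel to R(t₀)·J·ω(t₀). Then the measurement a(t) := R(t)ᵀ·å is constant in t, and the persistent excitation condition fails for all parameters: for every T > 0 and every μ ∈ (0,1) there exist t and a unit vector x (namely x = a(t₀)) with (1/T)·∫_t^{t+T} (a(s)ᵀx)² ds = 1 > 1 − μ. -/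

import Mathlib

open Matrix MeasureTheory intervalIntegral

noncomputable section

attribute [local instance] Matrix.normedAddCommGroup Matrix.normedSpace

/-- Cross product on ℝ³. -/
def cross3 (x y : Fin 3 → ℝ) : Fin 3 → ℝ :=
  ![x 1 * y 2 - x 2 * y 1, x 2 * y 0 - x 0 * y 2, x 0 * y 1 - x 1 * y 0]

/-- Euclidean norm on ℝ³. -/
def enorm3 (x : Fin 3 → ℝ) : ℝ := Real.sqrt (∑ i, (x i) ^ 2)

/-- Skew-symmetric cross-product matrix `[x]ₓ`. -/
def skew3 (x : Fin 3 → ℝ) : Matrix (Fin 3) (Fin 3) ℝ :=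
  !![0, -x 2, x 1; x 2, 0, -x 0; -x 1, x 0, 0]

/-- A solution of an autonomous ODE, with locally Lipschitz field, that starts at an
equilibrium point is constant. -/
lemma const_of_ode {F : Type*} [NormedAddCommGroup F] [NormedSpace ℝ F]
    (v : F → F) (f : ℝ → F) (t₀ : ℝ) (K : NNReal) (U : Set F) (hU : U ∈ nhds (f t₀))
    (hlip : LipschitzOnWith K v U) (hf : ∀ t, HasDerivAt f (v (f t)) t)
    (hzero : v (f t₀) = 0) : ∀ t, f t = f t₀ := by
  have hcont : Continuous f := by
    apply continuous_iff_continuousAt.2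
    exact fun t => (hf t).continuousAt
  set A : Set ℝ := {t | f t = f t₀} with hA
  have hclosed : IsClosed A := isClosed_eq hcont continuous_const
  have hopen : IsOpen A := by
    rw [isOpen_iff_mem_nhds]
    intro t₁ ht₁
    have ht₁' : f t₁ = f t₀ := ht₁
    have hUn : ∀ᶠ t in nhds t₁, f t ∈ U := by
      have : Filter.Tendsto f (nhds t₁) (nhds (f t₀)) := ht₁' ▸ hcont.continuousAt
      exact this.eventually_mem hU
    have heq : f =ᶠ[nhds t₁] (fun _ => f t₀) := by
      apply ODE_solution_unique_of_eventually (v := fun _ x => v x) (s := fun _ => U)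
        (Filter.Eventually.of_forall (fun _ => hlip))
      · exact hUn.mono fun t ht => ⟨hf t, ht⟩
      · filter_upwards with t
        refine ⟨?_, mem_of_mem_nhds hU⟩
        simpa [hzero] using (hasDerivAt_const t (f t₀))
      · exact ht₁'
    exact heq.mono fun t ht => by simpa [hA] using ht
  have hAu : A = Set.univ := by
    rcases (isClopen_iff.mp ⟨hclosed, hopen⟩) with h | h
    · exfalso
      have : t₀ ∈ A := rfl
      rw [h] at this
      exact this
    · exact h
  intro t
  have : t ∈ A := hAu ▸ Set.mem_univ t
  exact this

/-- in free rotation, if `ω(t₀)` is an eigenvector of `J` and the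
reference vector `å` is parallel to `R(t₀)Jω(t₀)`, then the measurement
`a(t) = R(t)ᵀå` is constant, and persistent excitation fails for all parameters. -/
theorem type1_aligned_not_PE
    (J1 J2 J3 : ℝ) (hJ1 : 0 < J1) (hJ2 : 0 < J2) (hJ3 : 0 < J3)
    (J : Matrix (Fin 3) (Fin 3) ℝ) (hJ : J = Matrix.diagonal ![J1, J2, J3])
    (E : (Fin 3 → ℝ) → Fin 3 → ℝ)
    (hE : ∀ w, E w = J⁻¹.mulVec (cross3 (J.mulVec w) w))
    (t₀ : ℝ)
    (R : ℝ → Matrix (Fin 3) (Fin 3) ℝ) (ω : ℝ → Fin 3 → ℝ)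
    (hRode : ∀ t, HasDerivAt R (R t * skew3 (ω t)) t)
    (hωode : ∀ t, HasDerivAt ω (E (ω t)) t)
    (hR₀orth : (R t₀)ᵀ * R t₀ = 1) (hR₀det : (R t₀).det = 1)
    (hω₀ : ω t₀ ≠ 0)
    (heig : ∃ lam : ℝ, J.mulVec (ω t₀) = lam • ω t₀)
    (aring : Fin 3 → ℝ) (haring : enorm3 aring = 1)
    (hpar : ∃ s : ℝ, aring = s • (R t₀).mulVec (J.mulVec (ω t₀)))
    (a : ℝ → Fin 3 → ℝ) (ha : ∀ t, a t = (R t)ᵀ.mulVec aring) :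
    (∀ t, a t = a t₀) ∧
      ∀ T μ : ℝ, 0 < T → 0 < μ → μ < 1 →
        ∃ (t : ℝ) (x : Fin 3 → ℝ), x = a t₀ ∧ enorm3 x = 1 ∧
          (1 / T) * (∫ s in t..(t + T), (a s ⬝ᵥ x) ^ 2) = 1 ∧ (1 : ℝ) > 1 - μ := by
  obtain ⟨lam, hlam⟩ := heig
  -- `E` is continuously differentiable
  have hEcd : ContDiff ℝ 1 E := by
    have hEfun : E = fun w => J⁻¹.mulVec (cross3 (J.mulVec w) w) := funext hE
    rw [hEfun]
    apply contDiff_pi.2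
    intro i
    fin_cases i <;>
      simp [cross3, Matrix.mulVec, dotProduct, Fin.sum_univ_three] <;> fun_prop
  -- `ω t₀` is an equilibrium of `E`
  have hE0 : E (ω t₀) = 0 := by
    rw [hE, hlam]
    have hc : cross3 (lam • ω t₀) (ω t₀) = 0 := by
      funext i; fin_cases i <;> simp [cross3] <;> ring
    rw [hc, Matrix.mulVec_zero]
  -- hence `ω` is constant
  obtain ⟨K, U, hU, hlip⟩ := (hEcd.contDiffAt (x := ω t₀)).exists_lipschitzOnWith
  have hωconst : ∀ t, ω t = ω t₀ := const_of_ode E ω t₀ K U hU hlip hωode hE0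
  -- basic facts about the skew matrix of `ω t₀`
  set S : Matrix (Fin 3) (Fin 3) ℝ := skew3 (ω t₀) with hS
  have hSmul : S.mulVec (ω t₀) = 0 := by
    funext i
    fin_cases i <;> simp [hS, skew3, Matrix.mulVec, dotProduct, Fin.sum_univ_three] <;> ring
  have hST : Sᵀ = -S := by
    funext i j
    fin_cases i <;> fin_cases j <;> simp [hS, skew3]
  obtain ⟨s, hs⟩ := hpar
  have hRRT : R t₀ * (R t₀)ᵀ = 1 := mul_eq_one_comm.mp hR₀orth
  -- the value of `a` at `t₀` is a multiple of `ω t₀`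
  have ha₀ : a t₀ = (s * lam) • ω t₀ := by
    rw [ha, hs, Matrix.mulVec_smul, Matrix.mulVec_mulVec, hR₀orth, Matrix.one_mulVec, hlam,
      smul_smul]
  -- the ODE satisfied by `a`
  have haode : ∀ t, HasDerivAt a (Sᵀ.mulVec (a t)) t := by
    intro t
    have hfun : a = fun t => (R t)ᵀ.mulVec aring := funext ha
    rw [hfun]
    let L : Matrix (Fin 3) (Fin 3) ℝ →ₗ[ℝ] (Fin 3 → ℝ) :=
      { toFun := fun M => Mᵀ.mulVec aring
        map_add' := fun M N => by simp [Matrix.transpose_add, Matrix.add_mulVec]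
        map_smul' := fun c M => by simp [Matrix.transpose_smul, Matrix.smul_mulVec] }
    have hR' : HasDerivAt R (R t * S) t := by
      have := hRode t
      rwa [hωconst t] at this
    have h : HasDerivAt (fun t => (R t)ᵀ.mulVec aring) ((R t * S)ᵀ.mulVec aring) t :=
      (L.toContinuousLinearMap.hasFDerivAt (x := R t)).comp_hasDerivAt t hR'
    rw [Matrix.transpose_mul, ← Matrix.mulVec_mulVec] at h
    exact h
  -- `a t₀` is an equilibrium of the linear field `x ↦ Sᵀ x`
  have hzeroa : Sᵀ.mulVec (a t₀) = 0 := by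
    rw [hST, ha₀, Matrix.mulVec_smul, Matrix.neg_mulVec, hSmul]
    simp
  -- hence `a` is constant
  have haconst : ∀ t, a t = a t₀ := by
    refine const_of_ode (fun x => Sᵀ.mulVec x) a t₀ ‖Sᵀ.mulVecLin.toContinuousLinearMap‖₊
      Set.univ Filter.univ_mem ?_ haode hzeroa
    exact (Sᵀ.mulVecLin.toContinuousLinearMap.lipschitz).lipschitzOnWith
  -- the squared norm of `a t₀` is 1
  have hdot : ∀ x : Fin 3 → ℝ, x ⬝ᵥ x = ∑ i, x i ^ 2 := fun x => by
    simp [dotProduct, sq]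
  have haring2 : aring ⬝ᵥ aring = 1 := by
    have h1 : Real.sqrt (aring ⬝ᵥ aring) = 1 := by rw [hdot]; exact haring
    rwa [Real.sqrt_eq_one] at h1
  have ha₀dot : a t₀ ⬝ᵥ a t₀ = 1 := by
    rw [ha, Matrix.dotProduct_mulVec, Matrix.vecMul_transpose, Matrix.mulVec_mulVec, hRRT,
      Matrix.one_mulVec, haring2]
  have ha₀norm : enorm3 (a t₀) = 1 := by
    rw [enorm3, ← hdot, ha₀dot, Real.sqrt_one]
  refine ⟨haconst, ?_⟩
  intro T μ hT hμ hμ1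
  refine ⟨t₀, a t₀, rfl, ha₀norm, ?_, by linarith⟩
  have hint : ∀ sv : ℝ, (a sv ⬝ᵥ a t₀) ^ 2 = 1 := fun sv => by
    rw [haconst sv, ha₀dot]; norm_num
  have : (∫ s in t₀..(t₀ + T), (a s ⬝ᵥ a t₀) ^ 2) = ∫ s in t₀..(t₀ + T), (1 : ℝ) := by
    apply intervalIntegral.integral_congr
    intro s _
    exact hint s
  rw [this, intervalIntegral.integral_const]
  simp
  field_simp

end
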